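/- Let b>0, α∈(1,2) and ε₀ ∈ (0, π/2). Then there exist constants c, c′ > 0 (depending only on b, α and ε₀) such that for all ρ ≥ 2 and all θ ∈ [π/2 + ε₀, π], | ∫₀^2 ( (ρe^{iθ})^{1−α} + r )^{1/(1−α)} · ( (ρe^{iθ})^{1−α} + r + 1/(αb) )^{−1} dr | ≤ c ρ^{2−α} + c′. -/

import Mathlib

open Real

-- w-equation
lemma aux_w_eq (ρ θ γ : ℝ) (hρ : 0 < ρ) (hθ1 : -π < θ) (hθ2 : θ ≤ π) :
    ((ρ : ℂ) * Complex.exp ((θ : ℂ) * Complex.I)) ^ (γ : ℂ) =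
      ((ρ ^ γ : ℝ) : ℂ) * Complex.exp (((γ * θ : ℝ) : ℂ) * Complex.I) := by
  have hz : (ρ : ℂ) * Complex.exp ((θ : ℂ) * Complex.I) =
      Complex.exp (((Real.log ρ : ℝ) : ℂ) + (θ : ℂ) * Complex.I) := by
    rw [Complex.exp_add, ← Complex.ofReal_exp, Real.exp_log hρ]
  have hne : (ρ : ℂ) * Complex.exp ((θ : ℂ) * Complex.I) ≠ 0 := by
    rw [hz]; exact Complex.exp_ne_zero _
  have hlog : Complex.log ((ρ : ℂ) * Complex.exp ((θ : ℂ) * Complex.I)) =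
      ((Real.log ρ : ℝ) : ℂ) + (θ : ℂ) * Complex.I := by
    rw [hz, Complex.log_exp] <;> simp [hθ1, hθ2]
  rw [Complex.cpow_def_of_ne_zero hne, hlog]
  have : (((Real.log ρ : ℝ) : ℂ) + (θ : ℂ) * Complex.I) * (γ : ℂ) =
      ((γ * Real.log ρ : ℝ) : ℂ) + ((γ * θ : ℝ) : ℂ) * Complex.I := by
    push_cast; ring
  rw [this, Complex.exp_add, ← Complex.ofReal_exp]
  congr 2
  rw [Real.rpow_def_of_pos hρ, mul_comm]

lemma aux_sin_lb (α ε₀ θ : ℝ) (hα : 1 < α) (hα2 : α < 2) (hε : 0 < ε₀)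
    (hε2 : ε₀ < π / 2) (h1 : π / 2 + ε₀ ≤ θ) (h2 : θ ≤ π) :
    min (2 / π * ((α - 1) * (π / 2 + ε₀))) (2 * (2 - α)) ≤ Real.sin ((α - 1) * θ) := by
  have hπ : 0 < π := Real.pi_pos
  have hθ0 : 0 < θ := by nlinarith
  have hφ0 : 0 < (α - 1) * θ := by nlinarith
  have hφπ : (α - 1) * θ ≤ (α - 1) * π := by nlinarith
  rcases le_or_gt ((α - 1) * θ) (π / 2) with h | h
  · have := Real.mul_le_sin hφ0.le h
    refine le_trans (min_le_left _ _) (le_trans ?_ this)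
    have h2π : (0:ℝ) ≤ 2 / π := by positivity
    have : (α - 1) * (π / 2 + ε₀) ≤ (α - 1) * θ := by nlinarith
    nlinarith
  · have hψ0 : 0 ≤ π - (α - 1) * θ := by nlinarith
    have hψ2 : π - (α - 1) * θ ≤ π / 2 := by nlinarith
    have hsin := Real.mul_le_sin hψ0 hψ2
    rw [Real.sin_pi_sub] at hsin
    refine le_trans (min_le_right _ _) (le_trans ?_ hsin)
    have : (2 - α) * π ≤ π - (α - 1) * θ := by nlinarith
    have h2π : (0:ℝ) < 2 / π := by positivity
    calc 2 * (2 - α) = 2 / π * ((2 - α) * π) := by field_simp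
    _ ≤ 2 / π * (π - (α - 1) * θ) := by nlinarith

lemma aux_cont (d a e : ℝ) (hd : 0 < d) :
    Continuous (fun r : ℝ => max d |r + a| ^ e) :=
  (continuous_const.max ((continuous_id.add continuous_const).abs)).rpow_const
    fun x => Or.inl (ne_of_gt (lt_of_lt_of_le hd (le_max_left _ _)))

lemma aux_integral_eq (d L e : ℝ) (hd : 0 < d) (hdL : d ≤ L) (he : e ≠ -1) :
    ∫ u in (-L)..L, max d |u| ^ e =
      2 * (d ^ (e + 1) + (L ^ (e + 1) - d ^ (e + 1)) / (e + 1)) := by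
  have hcont : Continuous (fun u : ℝ => max d |u| ^ e) := by
    simpa using aux_cont d 0 e hd
  have hint : ∀ a b : ℝ, IntervalIntegrable (fun u : ℝ => max d |u| ^ e) MeasureTheory.volume a b :=
    fun a b => hcont.intervalIntegrable a b
  have hsplit : ∫ u in (-L)..L, max d |u| ^ e =
      (∫ u in (-L)..(0:ℝ), max d |u| ^ e) + ∫ u in (0:ℝ)..L, max d |u| ^ e :=
    (intervalIntegral.integral_add_adjacent_intervals (hint _ _) (hint _ _)).symm
  have heven : ∫ u in (-L)..(0:ℝ), max d |u| ^ e = ∫ u in (0:ℝ)..L, max d |u| ^ e := by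
    have := intervalIntegral.integral_comp_neg (a := (0:ℝ)) (b := L)
      (fun u : ℝ => max d |u| ^ e)
    simp only [abs_neg, neg_zero] at this
    rw [← this]
  have hhalf : ∫ u in (0:ℝ)..L, max d |u| ^ e =
      d ^ (e + 1) + (L ^ (e + 1) - d ^ (e + 1)) / (e + 1) := by
    have hs2 : ∫ u in (0:ℝ)..L, max d |u| ^ e =
        (∫ u in (0:ℝ)..d, max d |u| ^ e) + ∫ u in d..L, max d |u| ^ e :=
      (intervalIntegral.integral_add_adjacent_intervals (hint _ _) (hint _ _)).symm
    have e1 : ∫ u in (0:ℝ)..d, max d |u| ^ e = d ^ (e + 1) := by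
      rw [intervalIntegral.integral_congr (g := fun _ => d ^ e) ?_]
      · rw [intervalIntegral.integral_const, smul_eq_mul, sub_zero, ← Real.rpow_one_add' hd.le]
        · ring_nf
        · intro hc; rw [add_comm] at hc; exact he (by linarith [hc])
      · intro u hu
        rw [Set.uIcc_of_le hd.le] at hu
        have : |u| ≤ d := by rw [abs_of_nonneg hu.1]; exact hu.2
        simp [max_eq_left this]
    have e2 : ∫ u in d..L, max d |u| ^ e = (L ^ (e + 1) - d ^ (e + 1)) / (e + 1) := by
      rw [intervalIntegral.integral_congr (g := fun u => u ^ e) ?_]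
      · exact integral_rpow (Or.inr ⟨he, by
          rw [Set.uIcc_of_le hdL]; intro hc; exact absurd hc.1 (by linarith)⟩)
      · intro u hu
        rw [Set.uIcc_of_le hdL] at hu
        have h0 : 0 ≤ u := le_trans hd.le hu.1
        have : d ≤ |u| := by rw [abs_of_nonneg h0]; exact hu.1
        simp only []; rw [max_eq_right this, abs_of_nonneg h0]
    rw [hs2, e1, e2]
  rw [hsplit, heven, hhalf]; ring

lemma aux_pointwise (W : ℂ) (cc d β p : ℝ) (hcc : 0 < cc) (hd : 0 < d)
    (hβ : β ≤ 0) (hp0 : 0 ≤ p) (hp1 : p ≤ 1) (him : d ≤ |W.im|) :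
    ‖W ^ (β : ℂ) * (W + (cc : ℂ))⁻¹‖ ≤
      (2 / cc) * max d |W.re| ^ β +
        ((cc / 2) ^ β * d ^ (p - 1)) * max d |W.re + cc| ^ (-p) := by
  have habsW : ‖W‖ ≥ d := le_trans him (Complex.abs_im_le_norm W)
  have hWpos : 0 < ‖W‖ := lt_of_lt_of_le hd habsW
  have hWc_im : (W + (cc : ℂ)).im = W.im := by simp
  have hWc_re : (W + (cc : ℂ)).re = W.re + cc := by simp
  have habsWc : d ≤ ‖W + (cc : ℂ)‖ := by
    refine le_trans ?_ (Complex.abs_im_le_norm _)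
    rw [hWc_im]; exact him
  have hWcpos : 0 < ‖W + (cc : ℂ)‖ := lt_of_lt_of_le hd habsWc
  have hmax1 : max d |W.re| ≤ ‖W‖ :=
    max_le habsW (Complex.abs_re_le_norm W)
  have hmax1pos : 0 < max d |W.re| := lt_of_lt_of_le hd (le_max_left _ _)
  have hmax2 : max d |W.re + cc| ≤ ‖W + (cc : ℂ)‖ := by
    refine max_le habsWc ?_
    rw [← hWc_re]; exact Complex.abs_re_le_norm _
  have hmax2pos : 0 < max d |W.re + cc| := lt_of_lt_of_le hd (le_max_left _ _)
  have habseq : ‖W ^ (β : ℂ) * (W + (cc : ℂ))⁻¹‖ =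
      ‖W‖ ^ β * (‖W + (cc : ℂ)‖)⁻¹ := by
    rw [norm_mul, norm_inv, Complex.norm_cpow_real]
  rw [habseq]
  rcases le_or_gt (‖W‖) (cc / 2) with h | h
  · -- first term dominates
    have hc2 : cc / 2 ≤ ‖W + (cc : ℂ)‖ := by
      have h1 : ‖(cc : ℂ)‖ ≤ ‖W + (cc : ℂ)‖ + ‖W‖ := by
        calc ‖(cc : ℂ)‖ = ‖(W + (cc : ℂ)) + (-W)‖ := by ring_nf
        _ ≤ _ := by simpa using norm_add_le (W + (cc : ℂ)) (-W)
      have h2 : ‖(cc : ℂ)‖ = cc := by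
        rw [Complex.norm_real, Real.norm_eq_abs, abs_of_pos hcc]
      linarith
    have t1 : ‖W‖ ^ β ≤ max d |W.re| ^ β :=
      Real.rpow_le_rpow_of_nonpos hmax1pos hmax1 hβ
    have t2 : (‖W + (cc : ℂ)‖)⁻¹ ≤ (cc / 2)⁻¹ := by
      apply inv_anti₀ (by positivity) hc2
    have : ‖W‖ ^ β * (‖W + (cc : ℂ)‖)⁻¹ ≤
        max d |W.re| ^ β * (cc / 2)⁻¹ := by
      apply mul_le_mul t1 t2 (by positivity) (by positivity)
    refine le_trans this (le_trans (le_of_eq ?_) (le_add_of_nonneg_right (by positivity)))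
    rw [inv_div]; ring
  · -- second term dominates
    have t1 : ‖W‖ ^ β ≤ (cc / 2) ^ β :=
      Real.rpow_le_rpow_of_nonpos (by positivity) h.le hβ
    have key : d ^ (1 - p) * max d |W.re + cc| ^ p ≤ ‖W + (cc : ℂ)‖ := by
      have : ‖W + (cc : ℂ)‖ =
          ‖W + (cc : ℂ)‖ ^ (1 - p) * ‖W + (cc : ℂ)‖ ^ p := by
        rw [← Real.rpow_add hWcpos]; norm_num
      rw [this]
      exact mul_le_mul (Real.rpow_le_rpow hd.le habsWc (by linarith))
        (Real.rpow_le_rpow hmax2pos.le hmax2 hp0) (by positivity) (by positivity)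
    have t2 : (‖W + (cc : ℂ)‖)⁻¹ ≤ d ^ (p - 1) * max d |W.re + cc| ^ (-p) := by
      have h1 : (‖W + (cc : ℂ)‖)⁻¹ ≤ (d ^ (1 - p) * max d |W.re + cc| ^ p)⁻¹ :=
        inv_anti₀ (by positivity) key
      refine le_trans h1 (le_of_eq ?_)
      rw [mul_inv, ← Real.rpow_neg hd.le, ← Real.rpow_neg hmax2pos.le]
      norm_num
    have : ‖W‖ ^ β * (‖W + (cc : ℂ)‖)⁻¹ ≤
        (cc / 2) ^ β * (d ^ (p - 1) * max d |W.re + cc| ^ (-p)) := by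
      apply mul_le_mul t1 t2 (by positivity) (by positivity)
    refine le_trans this (le_trans (le_of_eq (by ring)) (le_add_of_nonneg_left (by positivity)))

set_option maxHeartbeats 1000000 in
theorem stmt_15 (b α ε₀ : ℝ) (hb : 0 < b) (hα : 1 < α) (hα2 : α < 2)
    (hε : 0 < ε₀) (hε2 : ε₀ < π / 2) :
    ∃ c c' : ℝ, 0 < c ∧ 0 < c' ∧
      ∀ ρ θ : ℝ, 2 ≤ ρ → π / 2 + ε₀ ≤ θ → θ ≤ π →
        ‖∫ r in (0:ℝ)..2,
            (((ρ : ℂ) * Complex.exp ((θ : ℂ) * Complex.I)) ^ ((1 : ℂ) - (α : ℂ)) + (r : ℂ)) ^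
                ((1 : ℂ) / (1 - (α : ℂ))) *
              (((ρ : ℂ) * Complex.exp ((θ : ℂ) * Complex.I)) ^ ((1 : ℂ) - (α : ℂ)) + (r : ℂ) +
                1 / ((α : ℂ) * (b : ℂ)))⁻¹‖ ≤
          c * ρ ^ (2 - α) + c' := by
  have hπ : (0:ℝ) < π := Real.pi_pos
  have hα0 : 0 < α := by linarith
  have h1α : 1 - α < 0 := by linarith
  have hα1 : 0 < α - 1 := by linarith
  set cc := 1 / (α * b) with hccdef
  clear_value cc
  have hcc : 0 < cc := by rw [hccdef]; positivity
  set β := 1 / (1 - α) with hβdef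
  clear_value β
  have hβ : β < -1 := by
    rw [hβdef, div_lt_iff_of_neg h1α]; linarith
  have hβ1 : β + 1 < 0 := by linarith
  have hβ0 : β ≤ 0 := by linarith
  set p := max 0 (1 - (2 - α) / (α - 1)) with hpdef
  clear_value p
  have hp0 : 0 ≤ p := by rw [hpdef]; exact le_max_left _ _
  have hq0 : 0 < (2 - α) / (α - 1) := div_pos (by linarith) hα1
  have hp1 : p < 1 := by
    rw [hpdef]; apply max_lt one_pos; linarith
  have hkey : (α - 1) * (1 - p) ≤ 2 - α := by
    have h1 : 1 - (2 - α) / (α - 1) ≤ p := by rw [hpdef]; exact le_max_right _ _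
    have h2 : 1 - p ≤ (2 - α) / (α - 1) := by linarith
    calc (α - 1) * (1 - p) ≤ (α - 1) * ((2 - α) / (α - 1)) :=
          mul_le_mul_of_nonneg_left h2 hα1.le
      _ = 2 - α := by field_simp
  set m := min (min (2 / π * ((α - 1) * (π / 2 + ε₀))) (2 * (2 - α))) 1 with hmdef
  clear_value m
  have hm0 : 0 < m := by
    rw [hmdef]
    refine lt_min (lt_min ?_ ?_) one_pos
    · positivity
    · linarith
  have hm1 : m ≤ 1 := by rw [hmdef]; exact min_le_right _ _
  set K₁ := 2 * (1 + 1 / (-(β + 1))) with hK₁def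
  clear_value K₁
  have hK₁ : 0 < K₁ := by
    have : 0 < 1 / (-(β + 1)) := div_pos one_pos (by linarith)
    rw [hK₁def]; linarith
  set K₂ := 2 * (1 + (3 + cc) ^ (1 - p) / (1 - p)) with hK₂def
  clear_value K₂
  have hK₂ : 0 < K₂ := by
    have h3 : (0:ℝ) < (3 + cc) ^ (1 - p) := Real.rpow_pos_of_pos (by linarith) _
    have : 0 < (3 + cc) ^ (1 - p) / (1 - p) := by
      apply div_pos h3; linarith
    rw [hK₂def]; linarith
  set A := 2 / cc with hAdef
  clear_value A
  have hA : 0 < A := by rw [hAdef]; positivity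
  set B := (cc / 2) ^ β with hBdef
  clear_value B
  have hB : 0 < B := by rw [hBdef]; exact Real.rpow_pos_of_pos (by linarith) _
  have hmb : 0 < m ^ (β + 1) := Real.rpow_pos_of_pos hm0 _
  have hmp : 0 < m ^ (p - 1) := Real.rpow_pos_of_pos hm0 _
  refine ⟨A * K₁ * m ^ (β + 1) + B * K₂ * m ^ (p - 1) + 1, 1, by positivity, one_pos, ?_⟩
  intro ρ θ hρ hθ1 hθ2
  have hρ0 : 0 < ρ := by linarith
  have hρ1 : (1:ℝ) ≤ ρ := by linarith
  have hθne : -π < θ := by linarith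
  set s := ρ ^ (1 - α) with hsdef
  clear_value s
  have hs0 : 0 < s := by rw [hsdef]; exact Real.rpow_pos_of_pos hρ0 _
  have hs1 : s ≤ 1 := by rw [hsdef]; exact Real.rpow_le_one_of_one_le_of_nonpos hρ1 (by linarith)
  set d := m * s with hddef
  clear_value d
  have hd0 : 0 < d := by rw [hddef]; exact mul_pos hm0 hs0
  have hd1 : d ≤ 1 := by
    calc d = m * s := hddef
      _ ≤ 1 * 1 := by apply mul_le_mul hm1 hs1 hs0.le; norm_num
      _ = 1 := by norm_num
  set w := ((ρ:ℂ) * Complex.exp ((θ:ℂ) * Complex.I)) ^ ((1:ℂ) - (α:ℂ)) with hwdef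
  clear_value w
  have hw' : w = ((s : ℝ) : ℂ) * Complex.exp ((((1 - α) * θ : ℝ) : ℂ) * Complex.I) := by
    rw [hwdef, hsdef, show ((1:ℂ) - (α:ℂ)) = (((1 - α : ℝ)) : ℂ) by push_cast; ring]
    exact aux_w_eq ρ θ (1 - α) hρ0 hθne hθ2
  have hwre : w.re = s * Real.cos ((1 - α) * θ) := by
    rw [hw', Complex.re_ofReal_mul, Complex.exp_ofReal_mul_I_re]
  have hwim : w.im = s * Real.sin ((1 - α) * θ) := by
    rw [hw', Complex.im_ofReal_mul, Complex.exp_ofReal_mul_I_im]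
  have hsin : m ≤ Real.sin ((α - 1) * θ) := by
    rw [hmdef]
    exact le_trans (min_le_left _ _) (aux_sin_lb α ε₀ θ hα hα2 hε hε2 hθ1 hθ2)
  have hsin0 : 0 < Real.sin ((α - 1) * θ) := lt_of_lt_of_le hm0 hsin
  have himlb : d ≤ |w.im| := by
    rw [hwim, show (1 - α) * θ = -((α - 1) * θ) by ring, Real.sin_neg, mul_neg, abs_neg,
      abs_of_nonneg (mul_nonneg hs0.le hsin0.le), hddef, mul_comm]
    exact mul_le_mul_of_nonneg_left hsin hs0.le
  have hwre1 : |w.re| ≤ 1 := by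
    rw [hwre, abs_mul, abs_of_pos hs0]
    calc s * |Real.cos ((1 - α) * θ)| ≤ s * 1 := by
          apply mul_le_mul_of_nonneg_left (Real.abs_cos_le_one _) hs0.le
      _ ≤ 1 := by linarith
  have hwrelb : -1 ≤ w.re := by have := abs_le.mp hwre1; exact this.1
  have hwreub : w.re ≤ 1 := (abs_le.mp hwre1).2
  set G := fun r : ℝ => A * max d |r + w.re| ^ β +
      (B * d ^ (p - 1)) * max d |r + (w.re + cc)| ^ (-p) with hGdef
  have hbound : ∀ r : ℝ,
      ‖(w + (r:ℂ)) ^ ((1:ℂ) / (1 - (α:ℂ))) * (w + (r:ℂ) + 1 / ((α:ℂ) * (b:ℂ)))⁻¹‖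
        ≤ G r := by
    intro r
    have hcast1 : ((1:ℂ) / (1 - (α:ℂ))) = ((β : ℝ) : ℂ) := by
      rw [hβdef]; push_cast; ring
    have hcast2 : 1 / ((α:ℂ) * (b:ℂ)) = ((cc : ℝ) : ℂ) := by
      rw [hccdef]; push_cast; ring
    have hWre : (w + (r:ℂ)).re = r + w.re := by simp [add_comm]
    have hWim : (w + (r:ℂ)).im = w.im := by simp
    have happ := aux_pointwise (w + (r:ℂ)) cc d β p hcc hd0 hβ0 hp0 hp1.le
      (by rw [hWim]; exact himlb)
    rw [hWre] at happ
    rw [hcast1, hcast2]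
    rw [show r + w.re + cc = r + (w.re + cc) from by ring] at happ
    simp only [hGdef, hAdef, hBdef]
    exact happ
  have hint1 : ∀ a b : ℝ, IntervalIntegrable (fun r => max d |r + w.re| ^ β)
      MeasureTheory.volume a b := fun a b => (aux_cont d w.re β hd0).intervalIntegrable a b
  have hint2 : ∀ a b : ℝ, IntervalIntegrable (fun r => max d |r + (w.re + cc)| ^ (-p))
      MeasureTheory.volume a b := fun a b => (aux_cont d (w.re + cc) (-p) hd0).intervalIntegrable a b
  have hint0 : ∀ a b : ℝ, IntervalIntegrable (fun u : ℝ => max d |u| ^ β)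
      MeasureTheory.volume a b := by
    intro a b
    have := (aux_cont d 0 β hd0).intervalIntegrable a b (μ := MeasureTheory.volume)
    simpa using this
  have hint0' : ∀ a b : ℝ, IntervalIntegrable (fun u : ℝ => max d |u| ^ (-p))
      MeasureTheory.volume a b := by
    intro a b
    have := (aux_cont d 0 (-p) hd0).intervalIntegrable a b (μ := MeasureTheory.volume)
    simpa using this
  have hGint : IntervalIntegrable G MeasureTheory.volume 0 2 := by
    rw [hGdef]
    exact ((hint1 0 2).const_mul A).add ((hint2 0 2).const_mul (B * d ^ (p - 1)))
  have hnorm : ‖∫ r in (0:ℝ)..2,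
      (w + (r:ℂ)) ^ ((1:ℂ) / (1 - (α:ℂ))) * (w + (r:ℂ) + 1 / ((α:ℂ) * (b:ℂ)))⁻¹‖
      ≤ |∫ r in (0:ℝ)..2, G r| := by
    apply intervalIntegral.norm_integral_le_abs_of_norm_le ?_ hGint
    refine Filter.Eventually.of_forall fun t => ?_
    exact hbound t
  have hGnn : ∀ u : ℝ, 0 ≤ G u := by
    intro u; rw [hGdef]
    have n1 : (0:ℝ) ≤ max d |u + w.re| ^ β :=
      Real.rpow_nonneg (le_trans hd0.le (le_max_left _ _)) _
    have n2 : (0:ℝ) ≤ max d |u + (w.re + cc)| ^ (-p) :=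
      Real.rpow_nonneg (le_trans hd0.le (le_max_left _ _)) _
    have n3 : (0:ℝ) ≤ B * d ^ (p - 1) :=
      mul_nonneg hB.le (Real.rpow_nonneg hd0.le _)
    exact add_nonneg (mul_nonneg hA.le n1) (mul_nonneg n3 n2)
  have habsG : |∫ r in (0:ℝ)..2, G r| = ∫ r in (0:ℝ)..2, G r :=
    abs_of_nonneg (intervalIntegral.integral_nonneg (by norm_num) fun u _ => hGnn u)
  have hGsplit : ∫ r in (0:ℝ)..2, G r =
      A * (∫ r in (0:ℝ)..2, max d |r + w.re| ^ β) +
      (B * d ^ (p - 1)) * ∫ r in (0:ℝ)..2, max d |r + (w.re + cc)| ^ (-p) := by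
    rw [hGdef, intervalIntegral.integral_add ((hint1 0 2).const_mul A)
      ((hint2 0 2).const_mul (B * d ^ (p - 1))), intervalIntegral.integral_const_mul,
      intervalIntegral.integral_const_mul]
  -- first integral bound
  have hI1 : (∫ r in (0:ℝ)..2, max d |r + w.re| ^ β) ≤ K₁ * d ^ (β + 1) := by
    have hshift : (∫ r in (0:ℝ)..2, max d |r + w.re| ^ β) =
        ∫ u in (0 + w.re)..(2 + w.re), max d |u| ^ β :=
      intervalIntegral.integral_comp_add_right (fun u => max d |u| ^ β) w.re
    have hmono : (∫ u in (0 + w.re)..(2 + w.re), max d |u| ^ β) ≤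
        ∫ u in (-3:ℝ)..3, max d |u| ^ β := by
      apply intervalIntegral.integral_mono_interval (by linarith) (by linarith) (by linarith)
        (Filter.Eventually.of_forall fun u => Real.rpow_nonneg (le_trans hd0.le (le_max_left _ _)) _) (hint0 _ _)
    have hval := aux_integral_eq d 3 β hd0 (by linarith) (by linarith)
    have h3p : (0:ℝ) < (3:ℝ) ^ (β + 1) := Real.rpow_pos_of_pos (by norm_num) _
    have hdp : (0:ℝ) < d ^ (β + 1) := Real.rpow_pos_of_pos hd0 _
    have harith : 2 * (d ^ (β + 1) + ((3:ℝ) ^ (β + 1) - d ^ (β + 1)) / (β + 1))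
        ≤ K₁ * d ^ (β + 1) := by
      have e1 : ((3:ℝ) ^ (β + 1) - d ^ (β + 1)) / (β + 1) ≤ d ^ (β + 1) * (1 / (-(β + 1))) := by
        have r1 : ((3:ℝ) ^ (β + 1) - d ^ (β + 1)) / (β + 1) =
            (d ^ (β + 1) - (3:ℝ) ^ (β + 1)) / (-(β + 1)) := by
          rw [div_eq_div_iff (by linarith) (by linarith)]; ring
        have r2 : d ^ (β + 1) * (1 / (-(β + 1))) = d ^ (β + 1) / (-(β + 1)) := by ring
        rw [r1, r2]
        gcongr
        · linarith
        · linarith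
      have e2 : 2 * (1 + 1 / (-(β + 1))) * d ^ (β + 1) =
          2 * d ^ (β + 1) + 2 * (d ^ (β + 1) * (1 / (-(β + 1)))) := by ring
      rw [hK₁def, e2]; linarith
    calc (∫ r in (0:ℝ)..2, max d |r + w.re| ^ β) = _ := hshift
      _ ≤ ∫ u in (-3:ℝ)..3, max d |u| ^ β := hmono
      _ = 2 * (d ^ (β + 1) + ((3:ℝ) ^ (β + 1) - d ^ (β + 1)) / (β + 1)) := hval
      _ ≤ K₁ * d ^ (β + 1) := harith
  -- second integral bound
  have hI2 : (∫ r in (0:ℝ)..2, max d |r + (w.re + cc)| ^ (-p)) ≤ K₂ := by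
    have hshift : (∫ r in (0:ℝ)..2, max d |r + (w.re + cc)| ^ (-p)) =
        ∫ u in (0 + (w.re + cc))..(2 + (w.re + cc)), max d |u| ^ (-p) :=
      intervalIntegral.integral_comp_add_right (fun u => max d |u| ^ (-p)) (w.re + cc)
    have hmono : (∫ u in (0 + (w.re + cc))..(2 + (w.re + cc)), max d |u| ^ (-p)) ≤
        ∫ u in (-(3 + cc))..(3 + cc), max d |u| ^ (-p) := by
      apply intervalIntegral.integral_mono_interval (by linarith) (by linarith) (by linarith)
        (Filter.Eventually.of_forall fun u => Real.rpow_nonneg (le_trans hd0.le (le_max_left _ _)) _) (hint0' _ _)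
    have hval := aux_integral_eq d (3 + cc) (-p) hd0 (by linarith) (by linarith)
    have hrw : -p + 1 = 1 - p := by ring
    rw [hrw] at hval
    have hLp : (0:ℝ) < (3 + cc) ^ (1 - p) := Real.rpow_pos_of_pos (by linarith) _
    have hdp : (0:ℝ) < d ^ (1 - p) := Real.rpow_pos_of_pos hd0 _
    have hd1p : d ^ (1 - p) ≤ 1 := Real.rpow_le_one hd0.le hd1 (by linarith)
    have harith : 2 * (d ^ (1 - p) + ((3 + cc) ^ (1 - p) - d ^ (1 - p)) / (1 - p)) ≤ K₂ := by
      have e1 : ((3 + cc) ^ (1 - p) - d ^ (1 - p)) / (1 - p) ≤ (3 + cc) ^ (1 - p) / (1 - p) := by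
        gcongr
        · linarith
      rw [hK₂def]; linarith
    calc (∫ r in (0:ℝ)..2, max d |r + (w.re + cc)| ^ (-p)) = _ := hshift
      _ ≤ ∫ u in (-(3 + cc))..(3 + cc), max d |u| ^ (-p) := hmono
      _ = 2 * (d ^ (1 - p) + ((3 + cc) ^ (1 - p) - d ^ (1 - p)) / (1 - p)) := hval
      _ ≤ K₂ := harith
  -- rpow identities
  have hrp : (0:ℝ) ≤ ρ ^ (2 - α) := (Real.rpow_pos_of_pos hρ0 _).le
  have hsb : s ^ (β + 1) = ρ ^ (2 - α) := by
    rw [hsdef, ← Real.rpow_mul hρ0.le]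
    congr 1
    rw [hβdef, mul_add, mul_one_div, div_self (by linarith : (1:ℝ) - α ≠ 0)]; ring
  have hdb : d ^ (β + 1) = m ^ (β + 1) * ρ ^ (2 - α) := by
    rw [hddef, Real.mul_rpow hm0.le hs0.le, hsb]
  have hdpm : d ^ (p - 1) ≤ m ^ (p - 1) * ρ ^ (2 - α) := by
    have hsp : s ^ (p - 1) = ρ ^ ((1 - α) * (p - 1)) := by
      rw [hsdef, ← Real.rpow_mul hρ0.le]
    have hexp : (1 - α) * (p - 1) ≤ 2 - α := by
      have : (1 - α) * (p - 1) = (α - 1) * (1 - p) := by ring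
      linarith
    have hle : ρ ^ ((1 - α) * (p - 1)) ≤ ρ ^ (2 - α) :=
      Real.rpow_le_rpow_of_exponent_le hρ1 hexp
    calc d ^ (p - 1) = m ^ (p - 1) * s ^ (p - 1) := by
          rw [hddef, Real.mul_rpow hm0.le hs0.le]
      _ ≤ m ^ (p - 1) * ρ ^ (2 - α) := by
          rw [hsp]; exact mul_le_mul_of_nonneg_left hle hmp.le
  -- combine
  have hfinal : A * (K₁ * d ^ (β + 1)) + (B * d ^ (p - 1)) * K₂ ≤
      (A * K₁ * m ^ (β + 1) + B * K₂ * m ^ (p - 1)) * ρ ^ (2 - α) := by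
    have t1 : A * (K₁ * d ^ (β + 1)) = A * K₁ * m ^ (β + 1) * ρ ^ (2 - α) := by
      rw [hdb]; ring
    have t2 : (B * d ^ (p - 1)) * K₂ ≤ B * K₂ * m ^ (p - 1) * ρ ^ (2 - α) := by
      have := mul_le_mul_of_nonneg_left hdpm (by positivity : (0:ℝ) ≤ B * K₂)
      calc (B * d ^ (p - 1)) * K₂ = B * K₂ * d ^ (p - 1) := by ring
        _ ≤ B * K₂ * (m ^ (p - 1) * ρ ^ (2 - α)) := this
        _ = B * K₂ * m ^ (p - 1) * ρ ^ (2 - α) := by ring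
    linarith [t2]
  have hIG : (∫ r in (0:ℝ)..2, G r) ≤
      (A * K₁ * m ^ (β + 1) + B * K₂ * m ^ (p - 1)) * ρ ^ (2 - α) := by
    rw [hGsplit]
    have s1 : A * (∫ r in (0:ℝ)..2, max d |r + w.re| ^ β) ≤ A * (K₁ * d ^ (β + 1)) :=
      mul_le_mul_of_nonneg_left hI1 hA.le
    have s2 : (B * d ^ (p - 1)) * (∫ r in (0:ℝ)..2, max d |r + (w.re + cc)| ^ (-p)) ≤
        (B * d ^ (p - 1)) * K₂ :=
      mul_le_mul_of_nonneg_left hI2 (mul_nonneg hB.le (Real.rpow_nonneg hd0.le _))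
    linarith [s1, s2, hfinal]
  calc ‖∫ r in (0:ℝ)..2,
        (w + (r:ℂ)) ^ ((1:ℂ) / (1 - (α:ℂ))) * (w + (r:ℂ) + 1 / ((α:ℂ) * (b:ℂ)))⁻¹‖
      ≤ |∫ r in (0:ℝ)..2, G r| := hnorm
    _ = ∫ r in (0:ℝ)..2, G r := habsG
    _ ≤ (A * K₁ * m ^ (β + 1) + B * K₂ * m ^ (p - 1)) * ρ ^ (2 - α) := hIG
    _ ≤ (A * K₁ * m ^ (β + 1) + B * K₂ * m ^ (p - 1) + 1) * ρ ^ (2 - α) + 1 := by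
        have e3 : (A * K₁ * m ^ (β + 1) + B * K₂ * m ^ (p - 1) + 1) * ρ ^ (2 - α) + 1 =
            (A * K₁ * m ^ (β + 1) + B * K₂ * m ^ (p - 1)) * ρ ^ (2 - α) + (ρ ^ (2 - α) + 1) := by
          ring
        rw [e3]; linarith
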